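/- arXiv:1509.00500 — 3 statements merged into one kernel-verified Lean document; each statement's English description precedes it below -/
import Mathlib

section
/- Let 1 ≤ s ≤ p/2 and m ≥ s with s + m ≤ p, and suppose m·λ_min(s+m) > (μC_σ)²·s·λ_max(m) for some μ > 1 and C_σ > 0. Then ϑ(s,m,μ,C_σ) ≥ λ_min(s+m)·(1 − μC_σ √(s·λ_max(m)) / √(m·λ_min(s+m)))² > 0. -/
open scoped BigOperators

noncomputable section

/-- The quadratic form `t ↦ tᵀ Φ t`. -/
noncomputable def qf {p : ℕ} (Φ : Matrix (Fin p) (Fin p) ℝ) (t : Fin p → ℝ) : ℝ :=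
  dotProduct t (Φ.mulVec t)

/-- The `ℓ⁰` norm: number of nonzero coordinates. -/
noncomputable def l0norm {p : ℕ} (t : Fin p → ℝ) : ℕ :=
  (Finset.univ.filter fun j => t j ≠ 0).card

/-- Minimum restricted eigenvalue `λ_min(m)` of `Φ`. -/
noncomputable def lamMin {p : ℕ} (Φ : Matrix (Fin p) (Fin p) ℝ) (m : ℕ) : ℝ :=
  sInf ((fun t => qf Φ t / ∑ j, t j ^ 2) '' {t : Fin p → ℝ | t ≠ 0 ∧ l0norm t ≤ m})

/-- Maximum restricted eigenvalue `λ_max(m)` of `Φ`. -/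
noncomputable def lamMax {p : ℕ} (Φ : Matrix (Fin p) (Fin p) ℝ) (m : ℕ) : ℝ :=
  sSup ((fun t => qf Φ t / ∑ j, t j ^ 2) '' {t : Fin p → ℝ | t ≠ 0 ∧ l0norm t ≤ m})

/-- The cone `D(μ, J) = {d : ‖(Υd)_{J^c}‖₁ ≤ μ ‖(Υd)_J‖₁}`. -/
def Dset {p : ℕ} (σ : Fin p → ℝ) (μ : ℝ) (J : Finset (Fin p)) : Set (Fin p → ℝ) :=
  {d | ∑ j ∈ Jᶜ, σ j * |d j| ≤ μ * ∑ j ∈ J, σ j * |d j|}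

/-- The collection `G(C_σ)` of index sets `J` with `σ_j ≤ C_σ σ_{j'}` for `j ∈ J`, `j' ∉ J`. -/
def Gset {p : ℕ} (σ : Fin p → ℝ) (Cσ : ℝ) : Set (Finset (Fin p)) :=
  {J | ∀ j ∈ J, ∀ j' ∉ J, σ j ≤ Cσ * σ j'}

open scoped MatrixOrder in
theorem Matrix.PosSemidef.exists_sqrt_aux {p : ℕ} {Φ : Matrix (Fin p) (Fin p) ℝ}
    (hΦ : Φ.PosSemidef) :
    ∃ A : Matrix (Fin p) (Fin p) ℝ, A.transpose = A ∧ A * A = Φ := by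
  refine ⟨CFC.sqrt Φ, ?_, CFC.sqrt_mul_sqrt_self Φ hΦ.nonneg⟩
  have h : (CFC.sqrt Φ - 0).IsHermitian := (CFC.sqrt_nonneg Φ).1
  rw [sub_zero] at h
  simpa [Matrix.IsHermitian, Matrix.conjTranspose_eq_transpose_of_trivial] using h

noncomputable def Matrix.PosSemidef.sqrt {p : ℕ} {Φ : Matrix (Fin p) (Fin p) ℝ}
    (hΦ : Φ.PosSemidef) : Matrix (Fin p) (Fin p) ℝ :=
  Classical.choose hΦ.exists_sqrt_aux

theorem Matrix.PosSemidef.sqrt_transpose {p : ℕ} {Φ : Matrix (Fin p) (Fin p) ℝ}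
    (hΦ : Φ.PosSemidef) : hΦ.sqrt.transpose = hΦ.sqrt :=
  (Classical.choose_spec hΦ.exists_sqrt_aux).1

theorem Matrix.PosSemidef.sqrt_mul_self {p : ℕ} {Φ : Matrix (Fin p) (Fin p) ℝ}
    (hΦ : Φ.PosSemidef) : hΦ.sqrt * hΦ.sqrt = Φ :=
  (Classical.choose_spec hΦ.exists_sqrt_aux).2

section VthAux

open Finset

variable {p : ℕ}

lemma qf_nonneg' (Φ : Matrix (Fin p) (Fin p) ℝ) (hΦ : Φ.PosSemidef) (t : Fin p → ℝ) :
    0 ≤ qf Φ t := by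
  simpa [qf] using hΦ.dotProduct_mulVec_nonneg t

lemma qf_eq_sq (Φ : Matrix (Fin p) (Fin p) ℝ) (hΦ : Φ.PosSemidef) (t : Fin p → ℝ) :
    qf Φ t = ∑ j, (hΦ.sqrt.mulVec t j) ^ 2 := by
  set A := hΦ.sqrt with hAdef
  have hsymm : Matrix.transpose A = A := by
    exact hΦ.sqrt_transpose
  have hAij : ∀ i j, A i j = A j i := fun i j => by
    simpa using congrFun (congrFun hsymm j) i
  have hA : A * A = Φ := hΦ.sqrt_mul_self
  have hvm : Matrix.vecMul t A = A.mulVec t := by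
    funext j
    simp only [Matrix.vecMul, Matrix.mulVec, dotProduct]
    exact Finset.sum_congr rfl fun i _ => by rw [hAij i j, mul_comm]
  rw [qf, ← hA, ← Matrix.mulVec_mulVec, Matrix.dotProduct_mulVec, hvm]
  simp [dotProduct, pow_two]

lemma l2_triangle (x y : Fin p → ℝ) :
    Real.sqrt (∑ j, (x j + y j) ^ 2) ≤
      Real.sqrt (∑ j, x j ^ 2) + Real.sqrt (∑ j, y j ^ 2) := by
  have hx : (0:ℝ) ≤ ∑ j, x j ^ 2 := Finset.sum_nonneg fun _ _ => sq_nonneg _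
  have hy : (0:ℝ) ≤ ∑ j, y j ^ 2 := Finset.sum_nonneg fun _ _ => sq_nonneg _
  have hcs : (∑ j, x j * y j) ^ 2 ≤ (∑ j, x j ^ 2) * ∑ j, y j ^ 2 :=
    Finset.sum_mul_sq_le_sq_mul_sq _ _ _
  have hcs' : ∑ j, x j * y j ≤ Real.sqrt (∑ j, x j ^ 2) * Real.sqrt (∑ j, y j ^ 2) := by
    have h1 : ∑ j, x j * y j ≤ Real.sqrt ((∑ j, x j * y j) ^ 2) := by
      rw [Real.sqrt_sq_eq_abs]; exact le_abs_self _
    calc ∑ j, x j * y j ≤ Real.sqrt ((∑ j, x j * y j) ^ 2) := h1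
      _ ≤ Real.sqrt ((∑ j, x j ^ 2) * ∑ j, y j ^ 2) := Real.sqrt_le_sqrt hcs
      _ = _ := Real.sqrt_mul hx _
  have expand : ∑ j, (x j + y j) ^ 2
      = (∑ j, x j ^ 2) + 2 * (∑ j, x j * y j) + ∑ j, y j ^ 2 := by
    rw [Finset.mul_sum, ← Finset.sum_add_distrib, ← Finset.sum_add_distrib]
    apply Finset.sum_congr rfl
    intro j _
    ring
  have hb : (0:ℝ) ≤ Real.sqrt (∑ j, x j ^ 2) + Real.sqrt (∑ j, y j ^ 2) := by positivity
  have key : ∑ j, (x j + y j) ^ 2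
      ≤ (Real.sqrt (∑ j, x j ^ 2) + Real.sqrt (∑ j, y j ^ 2)) ^ 2 := by
    rw [expand]
    nlinarith [Real.sq_sqrt hx, Real.sq_sqrt hy, hcs']
  calc Real.sqrt (∑ j, (x j + y j) ^ 2)
      ≤ Real.sqrt ((Real.sqrt (∑ j, x j ^ 2) + Real.sqrt (∑ j, y j ^ 2)) ^ 2) :=
        Real.sqrt_le_sqrt key
    _ = _ := Real.sqrt_sq hb

lemma sqrt_qf_add (Φ : Matrix (Fin p) (Fin p) ℝ) (hΦ : Φ.PosSemidef) (a b : Fin p → ℝ) :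
    Real.sqrt (qf Φ (a + b)) ≤ Real.sqrt (qf Φ a) + Real.sqrt (qf Φ b) := by
  rw [qf_eq_sq Φ hΦ (a + b), qf_eq_sq Φ hΦ a, qf_eq_sq Φ hΦ b]
  have h : ∀ j, hΦ.sqrt.mulVec (a + b) j = hΦ.sqrt.mulVec a j + hΦ.sqrt.mulVec b j := by
    intro j; rw [Matrix.mulVec_add]; rfl
  simp_rw [h]
  exact l2_triangle _ _

lemma qf_neg (Φ : Matrix (Fin p) (Fin p) ℝ) (w : Fin p → ℝ) : qf Φ (-w) = qf Φ w := by
  simp [qf, Matrix.mulVec_neg]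

lemma sum_sq_pos_of_ne_zero {t : Fin p → ℝ} (ht : t ≠ 0) : 0 < ∑ j, t j ^ 2 := by
  have : ∃ j, t j ≠ 0 := by
    by_contra h
    push_neg at h
    exact ht (funext h)
  obtain ⟨j, hj⟩ := this
  exact Finset.sum_pos' (fun _ _ => sq_nonneg _) ⟨j, Finset.mem_univ j, by positivity⟩

lemma bddAbove_ratio (Φ : Matrix (Fin p) (Fin p) ℝ) (k : ℕ) :
    BddAbove ((fun t => qf Φ t / ∑ j, t j ^ 2) '' {t : Fin p → ℝ | t ≠ 0 ∧ l0norm t ≤ k}) := by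
  refine ⟨∑ i, ∑ j, |Φ i j|, ?_⟩
  rintro x ⟨t, ⟨ht0, _⟩, rfl⟩
  have hpos : 0 < ∑ j, t j ^ 2 := sum_sq_pos_of_ne_zero ht0
  rw [div_le_iff₀ hpos]
  have hterm : ∀ i j : Fin p, t i * (Φ i j * t j) ≤ |Φ i j| * ∑ k, t k ^ 2 := by
    intro i j
    have h1 : t i ^ 2 ≤ ∑ k, t k ^ 2 :=
      Finset.single_le_sum (fun k _ => sq_nonneg (t k)) (Finset.mem_univ i)
    have h2 : t j ^ 2 ≤ ∑ k, t k ^ 2 :=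
      Finset.single_le_sum (fun k _ => sq_nonneg (t k)) (Finset.mem_univ j)
    have habs : |t i| * |t j| ≤ ∑ k, t k ^ 2 := by
      nlinarith [sq_nonneg (|t i| - |t j|), sq_abs (t i), sq_abs (t j)]
    calc t i * (Φ i j * t j) ≤ |t i * (Φ i j * t j)| := le_abs_self _
      _ = |Φ i j| * (|t i| * |t j|) := by rw [abs_mul, abs_mul]; ring
      _ ≤ |Φ i j| * ∑ k, t k ^ 2 := mul_le_mul_of_nonneg_left habs (abs_nonneg _)
  calc qf Φ t = ∑ i, ∑ j, t i * (Φ i j * t j) := by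
        simp [qf, dotProduct, Matrix.mulVec, Finset.mul_sum]
    _ ≤ ∑ i, ∑ j, |Φ i j| * ∑ k, t k ^ 2 :=
        Finset.sum_le_sum fun i _ => Finset.sum_le_sum fun j _ => hterm i j
    _ = (∑ i, ∑ j, |Φ i j|) * ∑ k, t k ^ 2 := by
        rw [Finset.sum_mul]
        exact Finset.sum_congr rfl fun i _ => by rw [Finset.sum_mul]

lemma bddBelow_ratio (Φ : Matrix (Fin p) (Fin p) ℝ) (hΦ : Φ.PosSemidef) (k : ℕ) :
    BddBelow ((fun t => qf Φ t / ∑ j, t j ^ 2) '' {t : Fin p → ℝ | t ≠ 0 ∧ l0norm t ≤ k}) := by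
  refine ⟨0, ?_⟩
  rintro x ⟨t, ⟨ht0, _⟩, rfl⟩
  exact div_nonneg (qf_nonneg' Φ hΦ t) (Finset.sum_nonneg fun _ _ => sq_nonneg _)

lemma lamMin_le_ratio (Φ : Matrix (Fin p) (Fin p) ℝ) (hΦ : Φ.PosSemidef) (k : ℕ)
    (t : Fin p → ℝ) (ht0 : t ≠ 0) (htk : l0norm t ≤ k) :
    lamMin Φ k ≤ qf Φ t / ∑ j, t j ^ 2 :=
  csInf_le (bddBelow_ratio Φ hΦ k) ⟨t, ⟨ht0, htk⟩, rfl⟩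

lemma qf_le_lamMax (Φ : Matrix (Fin p) (Fin p) ℝ) (k : ℕ)
    (t : Fin p → ℝ) (htk : l0norm t ≤ k) :
    qf Φ t ≤ lamMax Φ k * ∑ j, t j ^ 2 := by
  rcases eq_or_ne t 0 with rfl | ht0
  · simp [qf]
  · have h : qf Φ t / ∑ j, t j ^ 2 ≤ lamMax Φ k :=
      le_csSup (bddAbove_ratio Φ k) ⟨t, ⟨ht0, htk⟩, rfl⟩
    have hpos : 0 < ∑ j, t j ^ 2 := sum_sq_pos_of_ne_zero ht0
    rw [div_le_iff₀ hpos] at h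
    exact h

lemma lamMax_nonneg (Φ : Matrix (Fin p) (Fin p) ℝ) (hΦ : Φ.PosSemidef) (k : ℕ)
    (hp : 0 < p) (hk : 1 ≤ k) : 0 ≤ lamMax Φ k := by
  have j₀ : Fin p := ⟨0, hp⟩
  set t : Fin p → ℝ := fun j => if j = j₀ then 1 else 0 with ht
  have ht0 : t ≠ 0 := by
    intro h
    have := congrFun h j₀
    simp [ht] at this
  have htk : l0norm t ≤ k := by
    have : (Finset.univ.filter fun j => t j ≠ 0) ⊆ {j₀} := by
      intro j hj
      rw [Finset.mem_filter] at hj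
      rw [Finset.mem_singleton]
      by_contra hne
      exact hj.2 (by simp [ht, hne])
    calc l0norm t ≤ ({j₀} : Finset (Fin p)).card := Finset.card_le_card this
      _ = 1 := Finset.card_singleton _
      _ ≤ k := hk
  have h : qf Φ t / ∑ j, t j ^ 2 ≤ lamMax Φ k :=
    le_csSup (bddAbove_ratio Φ k) ⟨t, ⟨ht0, htk⟩, rfl⟩
  exact le_trans (div_nonneg (qf_nonneg' Φ hΦ t) (Finset.sum_nonneg fun _ _ => sq_nonneg _)) h

lemma l0norm_le_of_support {t : Fin p → ℝ} {T : Finset (Fin p)}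
    (h : ∀ j, j ∉ T → t j = 0) : l0norm t ≤ T.card := by
  apply Finset.card_le_card
  intro j hj
  rw [Finset.mem_filter] at hj
  by_contra hjT
  exact hj.2 (h j hjT)

lemma exists_topk (v : Fin p → ℝ) :
    ∀ (k : ℕ) (T : Finset (Fin p)), k ≤ T.card →
      ∃ S ⊆ T, S.card = k ∧ ∀ i ∈ S, ∀ j ∈ T \ S, |v j| ≤ |v i| := by
  intro k
  induction k with
  | zero => exact fun T _ => ⟨∅, Finset.empty_subset T, rfl, by simp⟩
  | succ k ih =>
    intro T hT
    have hne : T.Nonempty := Finset.card_pos.mp (by omega)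
    obtain ⟨t, htT, htmax⟩ := T.exists_max_image (fun j => |v j|) hne
    obtain ⟨S', hS'sub, hS'card, hS'max⟩ :=
      ih (T.erase t) (by rw [Finset.card_erase_of_mem htT]; omega)
    refine ⟨insert t S', ?_, ?_, ?_⟩
    · exact Finset.insert_subset htT (hS'sub.trans (Finset.erase_subset t T))
    · rw [Finset.card_insert_of_notMem (fun h => (Finset.mem_erase.mp (hS'sub h)).1 rfl), hS'card]
    · intro i hi j hj
      rcases Finset.mem_insert.mp hi with rfl | hi'
      · exact htmax j (Finset.mem_sdiff.mp hj).1
      · apply hS'max i hi'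
        rw [Finset.mem_sdiff] at hj ⊢
        refine ⟨Finset.mem_erase.mpr ⟨?_, hj.1⟩, fun h => hj.2 (Finset.mem_insert_of_mem h)⟩
        rintro rfl
        exact hj.2 (Finset.mem_insert_self _ _)

lemma small_bound (Φ : Matrix (Fin p) (Fin p) ℝ) (hΦ : Φ.PosSemidef) (m : ℕ)
    (hL : 0 ≤ lamMax Φ m) (T : Finset (Fin p)) (hT : T.card ≤ m)
    (v : Fin p → ℝ) (hv : ∀ j, j ∉ T → v j = 0) (b : ℝ) (hb : 0 ≤ b)
    (hcap : ∀ j ∈ T, |v j| ≤ b) :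
    Real.sqrt (qf Φ v) ≤ Real.sqrt (lamMax Φ m) * (Real.sqrt m * b) := by
  have hqf : qf Φ v ≤ lamMax Φ m * ∑ j, v j ^ 2 :=
    qf_le_lamMax Φ m v (le_trans (l0norm_le_of_support hv) hT)
  have hsum : ∑ j, v j ^ 2 ≤ (m : ℝ) * b ^ 2 := by
    have h1 : ∑ j, v j ^ 2 = ∑ j ∈ T, v j ^ 2 := by
      symm
      apply Finset.sum_subset (Finset.subset_univ T)
      intro x _ hx
      rw [hv x hx]
      ring
    have h2 : ∑ j ∈ T, v j ^ 2 ≤ ∑ _j ∈ T, b ^ 2 := by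
      apply Finset.sum_le_sum
      intro j hj
      calc v j ^ 2 = |v j| ^ 2 := (sq_abs _).symm
        _ ≤ b ^ 2 := pow_le_pow_left₀ (abs_nonneg _) (hcap j hj) 2
    have h3 : ∑ _j ∈ T, b ^ 2 = (T.card : ℝ) * b ^ 2 := by
      rw [Finset.sum_const, nsmul_eq_mul]
    have h4 : (T.card : ℝ) ≤ (m : ℝ) := Nat.cast_le.mpr hT
    rw [h1]
    calc ∑ j ∈ T, v j ^ 2 ≤ (T.card : ℝ) * b ^ 2 := by rw [← h3]; exact h2
      _ ≤ (m : ℝ) * b ^ 2 := by nlinarith [sq_nonneg b]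
  calc Real.sqrt (qf Φ v) ≤ Real.sqrt (lamMax Φ m * ((m : ℝ) * b ^ 2)) := by
        apply Real.sqrt_le_sqrt
        calc qf Φ v ≤ lamMax Φ m * ∑ j, v j ^ 2 := hqf
          _ ≤ lamMax Φ m * ((m : ℝ) * b ^ 2) := mul_le_mul_of_nonneg_left hsum hL
    _ = Real.sqrt (lamMax Φ m) * (Real.sqrt m * b) := by
        rw [Real.sqrt_mul hL, Real.sqrt_mul (Nat.cast_nonneg m), Real.sqrt_sq hb]

lemma key_bound (Φ : Matrix (Fin p) (Fin p) ℝ) (hΦ : Φ.PosSemidef) (m : ℕ) (hm : 1 ≤ m)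
    (hL : 0 ≤ lamMax Φ m) :
    ∀ T : Finset (Fin p), ∀ v : Fin p → ℝ, (∀ j, j ∉ T → v j = 0) → ∀ b : ℝ, 0 ≤ b →
      (∀ j ∈ T, |v j| ≤ b) →
      Real.sqrt (qf Φ v) ≤
        Real.sqrt (lamMax Φ m) * ((∑ j ∈ T, |v j|) / Real.sqrt m + Real.sqrt m * b) := by
  intro T
  induction T using Finset.strongInduction with
  | _ T ih =>
    intro v hv b hb hcap
    have hK : 0 ≤ Real.sqrt (lamMax Φ m) := Real.sqrt_nonneg _
    have hsm : 0 < Real.sqrt m := Real.sqrt_pos.mpr (by exact_mod_cast Nat.pos_of_ne_zero (by omega))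
    have hsum_nonneg : 0 ≤ (∑ j ∈ T, |v j|) / Real.sqrt m :=
      div_nonneg (Finset.sum_nonneg fun _ _ => abs_nonneg _) hsm.le
    by_cases hTm : T.card ≤ m
    · have h := small_bound Φ hΦ m hL T hTm v hv b hb hcap
      calc Real.sqrt (qf Φ v) ≤ Real.sqrt (lamMax Φ m) * (Real.sqrt m * b) := h
        _ ≤ _ := by
            apply mul_le_mul_of_nonneg_left _ hK
            linarith
    · push_neg at hTm
      obtain ⟨S, hST, hScard, hStop⟩ := exists_topk v m T hTm.le
      have hSne : S.Nonempty := Finset.card_pos.mp (by omega)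
      obtain ⟨i₀, hi₀S, hi₀min⟩ := S.exists_min_image (fun j => |v j|) hSne
      set b' : ℝ := |v i₀| with hb'def
      have hb' : 0 ≤ b' := abs_nonneg _
      set v₁ : Fin p → ℝ := fun j => if j ∈ S then v j else 0 with hv₁
      set v₂ : Fin p → ℝ := fun j => if j ∈ S then 0 else v j with hv₂
      have hsplit : v = v₁ + v₂ := by
        funext j
        by_cases hj : j ∈ S <;> simp [hv₁, hv₂, hj]
      have h1 : Real.sqrt (qf Φ v₁) ≤ Real.sqrt (lamMax Φ m) * (Real.sqrt m * b) := by
        apply small_bound Φ hΦ m hL S (le_of_eq hScard) v₁ _ b hb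
        · intro j hj
          have : v₁ j = v j := by simp [hv₁, hj]
          rw [this]
          exact hcap j (hST hj)
        · intro j hj
          simp [hv₁, hj]
      have hsub : T \ S ⊂ T := Finset.sdiff_ssubset hST hSne
      have h2 : Real.sqrt (qf Φ v₂) ≤
          Real.sqrt (lamMax Φ m) * ((∑ j ∈ T \ S, |v₂ j|) / Real.sqrt m + Real.sqrt m * b') := by
        apply ih (T \ S) hsub v₂ _ b' hb'
        · intro j hj
          rw [Finset.mem_sdiff] at hj
          have : v₂ j = v j := by simp [hv₂, hj.2]
          rw [this]
          exact hStop i₀ hi₀S j (Finset.mem_sdiff.mpr hj)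
        · intro j hj
          by_cases hjS : j ∈ S
          · simp [hv₂, hjS]
          · have : j ∉ T := fun hT' => hj (Finset.mem_sdiff.mpr ⟨hT', hjS⟩)
            simp [hv₂, hjS, hv j this]
      have hv₂sum : ∑ j ∈ T \ S, |v₂ j| = ∑ j ∈ T \ S, |v j| := by
        apply Finset.sum_congr rfl
        intro j hj
        rw [Finset.mem_sdiff] at hj
        simp [hv₂, hj.2]
      have hmb' : (m : ℝ) * b' ≤ ∑ j ∈ S, |v j| := by
        have := Finset.card_nsmul_le_sum S (fun j => |v j|) b' (fun j hj => hi₀min j hj)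
        rw [hScard] at this
        simpa [nsmul_eq_mul] using this
      have hb'2 : Real.sqrt m * b' ≤ (∑ j ∈ S, |v j|) / Real.sqrt m := by
        rw [le_div_iff₀ hsm]
        have : Real.sqrt m * b' * Real.sqrt m = (m : ℝ) * b' := by
          rw [mul_comm (Real.sqrt m * b') (Real.sqrt m), ← mul_assoc,
            Real.mul_self_sqrt (Nat.cast_nonneg m)]
        rw [this]
        exact hmb'
      have hsumT : ∑ j ∈ T \ S, |v j| + ∑ j ∈ S, |v j| = ∑ j ∈ T, |v j| :=
        Finset.sum_sdiff hST
      calc Real.sqrt (qf Φ v) = Real.sqrt (qf Φ (v₁ + v₂)) := by rw [← hsplit]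
        _ ≤ Real.sqrt (qf Φ v₁) + Real.sqrt (qf Φ v₂) := sqrt_qf_add Φ hΦ v₁ v₂
        _ ≤ Real.sqrt (lamMax Φ m) * (Real.sqrt m * b) +
            Real.sqrt (lamMax Φ m) * ((∑ j ∈ T \ S, |v₂ j|) / Real.sqrt m + Real.sqrt m * b') := by
              linarith
        _ ≤ _ := by
            rw [hv₂sum, ← mul_add]
            apply mul_le_mul_of_nonneg_left _ hK
            have : (∑ j ∈ T \ S, |v j|) / Real.sqrt m + (∑ j ∈ S, |v j|) / Real.sqrt m
                = (∑ j ∈ T, |v j|) / Real.sqrt m := by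
              rw [← add_div, hsumT]
            linarith [hb'2]

end VthAux


lemma alg_id2 (a b u v q : ℝ) (ha : a ≠ 0) (hb : b ≠ 0) (hq : a ^ 2 = q) :
    q * (1 - u * v / (b * a)) ^ 2 = (a - u * v / b) ^ 2 := by
  subst hq
  field_simp


/-- **Inequality \fr{vartsm}.**  If `m λ_min(s+m) > (μ C_σ)² s λ_max(m)` then
`ϑ(s,m,μ,C_σ) ≥ λ_min(s+m) (1 - μ C_σ √(s λ_max(m)) / √(m λ_min(s+m)))² > 0`,
i.e. the lower bound is positive and every ratio `dᵀΦd/‖d_J‖₂²` entering the minimum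
defining `ϑ(s,m,μ,C_σ)` is at least this lower bound. -/
theorem vth_lower_bound
    (p : ℕ) (Φ : Matrix (Fin p) (Fin p) ℝ) (hΦ : Φ.PosSemidef)
    (σ : Fin p → ℝ) (hσpos : ∀ j, 0 < σ j)
    (s m : ℕ) (hs1 : 1 ≤ s) (hs2 : 2 * s ≤ p) (hsm : s ≤ m) (hsmp : s + m ≤ p)
    (μ Cσ : ℝ) (hμ : 1 < μ) (hCσ : 0 < Cσ)
    (hA1 : (μ * Cσ) ^ 2 * s * lamMax Φ m < m * lamMin Φ (s + m)) :
    0 < lamMin Φ (s + m) *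
        (1 - μ * Cσ * Real.sqrt (s * lamMax Φ m) / Real.sqrt (m * lamMin Φ (s + m))) ^ 2 ∧
    ∀ J ∈ Gset σ Cσ, J.card ≤ s → ∀ d ∈ Dset σ μ J, d ≠ 0 →
      lamMin Φ (s + m) *
          (1 - μ * Cσ * Real.sqrt (s * lamMax Φ m) / Real.sqrt (m * lamMin Φ (s + m))) ^ 2
        ≤ qf Φ d / ∑ j ∈ J, d j ^ 2 := by
  have hp : 0 < p := by omega
  have hm1 : 1 ≤ m := le_trans hs1 hsm
  have hlmax0 : 0 ≤ lamMax Φ m := lamMax_nonneg Φ hΦ m hp hm1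
  have hmpos : (0:ℝ) < m := by exact_mod_cast Nat.pos_of_ne_zero (by omega)
  have hspos : (0:ℝ) < s := by exact_mod_cast hs1
  have hμC : 0 < μ * Cσ := by nlinarith
  have hlmin_pos : 0 < lamMin Φ (s + m) := by
    nlinarith [mul_nonneg (mul_nonneg (sq_nonneg (μ * Cσ)) hspos.le) hlmax0]
  have hsm_pos : 0 < Real.sqrt m := Real.sqrt_pos.mpr hmpos
  have hslmin : 0 < Real.sqrt (lamMin Φ (s + m)) := Real.sqrt_pos.mpr hlmin_pos
  have hsq_s : Real.sqrt (s:ℝ) ^ 2 = (s:ℝ) := Real.sq_sqrt (Nat.cast_nonneg s)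
  have hsq_m : Real.sqrt (m:ℝ) ^ 2 = (m:ℝ) := Real.sq_sqrt (Nat.cast_nonneg m)
  have hsq_lmax : Real.sqrt (lamMax Φ m) ^ 2 = lamMax Φ m := Real.sq_sqrt hlmax0
  have hsq_lmin : Real.sqrt (lamMin Φ (s + m)) ^ 2 = lamMin Φ (s + m) :=
    Real.sq_sqrt hlmin_pos.le
  have hr_eq : lamMin Φ (s + m) *
      (1 - μ * Cσ * Real.sqrt (s * lamMax Φ m) / Real.sqrt (m * lamMin Φ (s + m))) ^ 2
      = (Real.sqrt (lamMin Φ (s + m)) -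
          μ * Cσ * (Real.sqrt s * Real.sqrt (lamMax Φ m)) / Real.sqrt m) ^ 2 := by
    rw [Real.sqrt_mul (Nat.cast_nonneg s), Real.sqrt_mul (Nat.cast_nonneg m)]
    exact alg_id2 _ _ _ _ _ hslmin.ne' hsm_pos.ne' hsq_lmin
  have hA2 : (μ * Cσ * (Real.sqrt s * Real.sqrt (lamMax Φ m))) ^ 2
      = (μ * Cσ) ^ 2 * s * lamMax Φ m := by
    linear_combination ((μ * Cσ) ^ 2 * Real.sqrt (lamMax Φ m) ^ 2) * hsq_s
      + ((μ * Cσ) ^ 2 * (s:ℝ)) * hsq_lmax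
  have hB2 : (Real.sqrt (lamMin Φ (s + m)) * Real.sqrt m) ^ 2 = m * lamMin Φ (s + m) := by
    linear_combination (Real.sqrt (m:ℝ) ^ 2) * hsq_lmin + lamMin Φ (s + m) * hsq_m
  have hAB : μ * Cσ * (Real.sqrt s * Real.sqrt (lamMax Φ m))
      < Real.sqrt (lamMin Φ (s + m)) * Real.sqrt m := by
    nlinarith [hA2, hB2, hA1, mul_pos hslmin hsm_pos,
      mul_nonneg (mul_nonneg hμC.le (Real.sqrt_nonneg (s:ℝ))) (Real.sqrt_nonneg (lamMax Φ m)),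
      mul_nonneg (Real.sqrt_nonneg (s:ℝ)) (Real.sqrt_nonneg (lamMax Φ m))]
  have hc_pos : 0 < Real.sqrt (lamMin Φ (s + m)) -
      μ * Cσ * (Real.sqrt s * Real.sqrt (lamMax Φ m)) / Real.sqrt m := by
    rw [sub_pos, div_lt_iff₀ hsm_pos]
    exact hAB
  constructor
  · rw [hr_eq]
    exact pow_pos hc_pos 2
  · intro J hJG hJcard d hd hd0
    have hDs : ∑ j ∈ Jᶜ, σ j * |d j| ≤ μ * ∑ j ∈ J, σ j * |d j| := hd
    have hnz : ∃ j ∈ J, d j ≠ 0 := by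
      by_contra h
      push_neg at h
      apply hd0
      have hJ0 : ∑ j ∈ J, σ j * |d j| = 0 :=
        Finset.sum_eq_zero fun j hj => by rw [h j hj]; simp
      have hc0 : ∑ j ∈ Jᶜ, σ j * |d j| ≤ 0 := by rw [hJ0] at hDs; linarith
      have hall : ∀ j ∈ Jᶜ, σ j * |d j| = 0 :=
        (Finset.sum_eq_zero_iff_of_nonneg
          (fun j _ => mul_nonneg (hσpos j).le (abs_nonneg _))).mp
          (le_antisymm hc0 (Finset.sum_nonneg fun j _ =>
            mul_nonneg (hσpos j).le (abs_nonneg _)))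
      funext j
      by_cases hj : j ∈ J
      · exact (h j hj).trans (by simp)
      · have hjc : j ∈ Jᶜ := Finset.mem_compl.mpr hj
        have h0 := hall j hjc
        have habs : |d j| = 0 := by
          rcases mul_eq_zero.mp h0 with h' | h'
          · exact absurd h' (hσpos j).ne'
          · exact h'
        simpa using abs_eq_zero.mp habs
    obtain ⟨jnz, hjnzJ, hjnz⟩ := hnz
    have hLpos : 0 < ∑ j ∈ J, d j ^ 2 :=
      Finset.sum_pos' (fun _ _ => sq_nonneg _) ⟨jnz, hjnzJ, by positivity⟩
    have hL : 0 < Real.sqrt (∑ j ∈ J, d j ^ 2) := Real.sqrt_pos.mpr hLpos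
    have hJc_ne : (Jᶜ : Finset (Fin p)).Nonempty := by
      rw [← Finset.card_pos, Finset.card_compl, Fintype.card_fin]
      omega
    obtain ⟨j₀, hj₀, hj₀min⟩ := Finset.exists_min_image Jᶜ σ hJc_ne
    have hj₀J : j₀ ∉ J := Finset.mem_compl.mp hj₀
    have hl1 : ∑ j ∈ Jᶜ, |d j| ≤ μ * Cσ * ∑ j ∈ J, |d j| := by
      have h1a : σ j₀ * ∑ j ∈ Jᶜ, |d j| ≤ ∑ j ∈ Jᶜ, σ j * |d j| := by
        rw [Finset.mul_sum]
        exact Finset.sum_le_sum fun j hj =>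
          mul_le_mul_of_nonneg_right (hj₀min j hj) (abs_nonneg _)
      have h1b : ∑ j ∈ J, σ j * |d j| ≤ Cσ * σ j₀ * ∑ j ∈ J, |d j| := by
        rw [Finset.mul_sum]
        exact Finset.sum_le_sum fun j hj =>
          mul_le_mul_of_nonneg_right (hJG j hj j₀ hj₀J) (abs_nonneg _)
      have hσ0 : 0 < σ j₀ := hσpos j₀
      have hchain : σ j₀ * ∑ j ∈ Jᶜ, |d j| ≤ μ * (Cσ * σ j₀ * ∑ j ∈ J, |d j|) :=
        le_trans h1a (le_trans hDs (mul_le_mul_of_nonneg_left h1b (by linarith)))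
      have heq : μ * (Cσ * σ j₀ * ∑ j ∈ J, |d j|)
          = σ j₀ * (μ * Cσ * ∑ j ∈ J, |d j|) := by ring
      rw [heq] at hchain
      exact le_of_mul_le_mul_left hchain hσ0
    have hCS : ∑ j ∈ J, |d j| ≤ Real.sqrt s * Real.sqrt (∑ j ∈ J, d j ^ 2) := by
      have h1 : (∑ j ∈ J, |d j|) ^ 2 ≤ (J.card : ℝ) * ∑ j ∈ J, d j ^ 2 := by
        have := Finset.sum_mul_sq_le_sq_mul_sq J (fun _ => (1:ℝ)) (fun j => |d j|)
        simpa [sq_abs] using this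
      have h2 : (∑ j ∈ J, |d j|) ≤ Real.sqrt ((J.card : ℝ) * ∑ j ∈ J, d j ^ 2) := by
        rw [← Real.sqrt_sq (Finset.sum_nonneg fun j _ => abs_nonneg (d j))]
        exact Real.sqrt_le_sqrt h1
      calc ∑ j ∈ J, |d j| ≤ Real.sqrt ((J.card : ℝ) * ∑ j ∈ J, d j ^ 2) := h2
        _ = Real.sqrt (J.card : ℝ) * Real.sqrt (∑ j ∈ J, d j ^ 2) :=
            Real.sqrt_mul (Nat.cast_nonneg _) _
        _ ≤ Real.sqrt s * Real.sqrt (∑ j ∈ J, d j ^ 2) := by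
            apply mul_le_mul_of_nonneg_right _ hL.le
            exact Real.sqrt_le_sqrt (by exact_mod_cast hJcard)
    have hexS : ∃ S : Finset (Fin p), S ⊆ Jᶜ ∧ S.card ≤ m ∧
        Real.sqrt (qf Φ (fun j => if j ∈ J ∪ S then 0 else d j)) ≤
          Real.sqrt (lamMax Φ m) * ((∑ j ∈ Jᶜ, |d j|) / Real.sqrt m) := by
      by_cases hcard : (Jᶜ : Finset (Fin p)).card ≤ m
      · refine ⟨Jᶜ, Finset.Subset.refl _, hcard, ?_⟩
        have hzero : (fun j => if j ∈ J ∪ Jᶜ then 0 else d j) = (0 : Fin p → ℝ) := by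
          funext j
          by_cases hj : j ∈ J
          · simp [Finset.mem_union, hj]
          · simp [Finset.mem_union, Finset.mem_compl, hj]
        rw [hzero]
        have hq0 : qf Φ (0 : Fin p → ℝ) = 0 := by simp [qf]
        rw [hq0, Real.sqrt_zero]
        have : 0 ≤ (∑ j ∈ Jᶜ, |d j|) / Real.sqrt m :=
          div_nonneg (Finset.sum_nonneg fun _ _ => abs_nonneg _) hsm_pos.le
        positivity
      · push_neg at hcard
        obtain ⟨S, hSsub, hScard, hStop⟩ := exists_topk d m Jᶜ hcard.le
        have hSne : S.Nonempty := Finset.card_pos.mp (by omega)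
        obtain ⟨i₀, hi₀S, hi₀min⟩ := S.exists_min_image (fun j => |d j|) hSne
        have hwsupp : ∀ j, j ∉ Jᶜ \ S →
            (fun j => if j ∈ J ∪ S then 0 else d j) j = 0 := by
          intro j hj
          rw [Finset.mem_sdiff] at hj
          push_neg at hj
          by_cases hjU : j ∈ J ∪ S
          · simp [hjU]
          · rw [Finset.mem_union] at hjU
            push_neg at hjU
            have hjc : j ∈ Jᶜ := Finset.mem_compl.mpr hjU.1
            exact absurd (hj hjc) hjU.2
        have hwcap : ∀ j ∈ Jᶜ \ S,
            |(fun j => if j ∈ J ∪ S then 0 else d j) j| ≤ |d i₀| := by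
          intro j hj
          have hj' := Finset.mem_sdiff.mp hj
          have hjJ : j ∉ J := Finset.mem_compl.mp hj'.1
          have hjU : j ∉ J ∪ S := by
            rw [Finset.mem_union]
            push_neg
            exact ⟨hjJ, hj'.2⟩
          simp only [hjU, if_neg]
          exact hStop i₀ hi₀S j hj
        have hkey := key_bound Φ hΦ m hm1 hlmax0 (Jᶜ \ S)
          (fun j => if j ∈ J ∪ S then 0 else d j) hwsupp |d i₀| (abs_nonneg _) hwcap
        refine ⟨S, hSsub, hScard.le, ?_⟩
        have hwsum : ∑ j ∈ Jᶜ \ S, |(fun j => if j ∈ J ∪ S then 0 else d j) j|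
            = ∑ j ∈ Jᶜ \ S, |d j| := by
          apply Finset.sum_congr rfl
          intro j hj
          have hj' := Finset.mem_sdiff.mp hj
          have hjJ : j ∉ J := Finset.mem_compl.mp hj'.1
          have hjU : j ∉ J ∪ S := by
            rw [Finset.mem_union]
            push_neg
            exact ⟨hjJ, hj'.2⟩
          simp [hjU]
        have hmb' : (m : ℝ) * |d i₀| ≤ ∑ j ∈ S, |d j| := by
          have h := Finset.card_nsmul_le_sum S (fun j => |d j|) |d i₀|
            (fun j hj => hi₀min j hj)
          rw [hScard] at h
          simpa [nsmul_eq_mul] using h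
        have hb'2 : Real.sqrt m * |d i₀| ≤ (∑ j ∈ S, |d j|) / Real.sqrt m := by
          rw [le_div_iff₀ hsm_pos]
          have heq : Real.sqrt m * |d i₀| * Real.sqrt m = (m:ℝ) * |d i₀| := by
            rw [mul_comm (Real.sqrt (m:ℝ) * |d i₀|) (Real.sqrt (m:ℝ)), ← mul_assoc,
              Real.mul_self_sqrt (Nat.cast_nonneg m)]
          rw [heq]
          exact hmb'
        have hsumT : ∑ j ∈ Jᶜ \ S, |d j| + ∑ j ∈ S, |d j| = ∑ j ∈ Jᶜ, |d j| :=
          Finset.sum_sdiff hSsub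
        refine le_trans hkey ?_
        rw [hwsum]
        apply mul_le_mul_of_nonneg_left _ (Real.sqrt_nonneg _)
        have hdiv : (∑ j ∈ Jᶜ \ S, |d j|) / Real.sqrt m + (∑ j ∈ S, |d j|) / Real.sqrt m
            = (∑ j ∈ Jᶜ, |d j|) / Real.sqrt m := by
          rw [← add_div, hsumT]
        linarith [hb'2]
    obtain ⟨S, hSJc, hScard, hw_bound⟩ := hexS
    set w : Fin p → ℝ := fun j => if j ∈ J ∪ S then 0 else d j with hwdef
    set u : Fin p → ℝ := fun j => if j ∈ J ∪ S then d j else 0 with hudef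
    have hdu : d = u + w := by
      funext j
      show d j = (if j ∈ J ∪ S then d j else 0) + (if j ∈ J ∪ S then 0 else d j)
      by_cases hj : j ∈ J ∪ S
      · rw [if_pos hj, if_pos hj, add_zero]
      · rw [if_neg hj, if_neg hj, zero_add]
    have hu_supp : ∀ j, j ∉ J ∪ S → u j = 0 := fun j hj => by
      simp only [hudef]
      rw [if_neg hj]
    have hu_sparse : l0norm u ≤ s + m := by
      refine le_trans (l0norm_le_of_support hu_supp) ?_
      calc (J ∪ S).card ≤ J.card + S.card := Finset.card_union_le _ _
        _ ≤ s + m := by omega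
    have hu_ne : u ≠ 0 := by
      intro h
      have h0 : u jnz = 0 := by rw [h]; rfl
      rw [hudef] at h0
      simp only [Finset.mem_union] at h0
      rw [if_pos (Or.inl hjnzJ)] at h0
      exact hjnz h0
    have hu2_ge : ∑ j ∈ J, d j ^ 2 ≤ ∑ j, u j ^ 2 := by
      have h2 : ∑ j ∈ J ∪ S, u j ^ 2 = ∑ j, u j ^ 2 :=
        Finset.sum_subset (Finset.subset_univ (J ∪ S))
          (fun x _ hx => by rw [hu_supp x hx]; ring)
      have h3 : ∑ j ∈ J ∪ S, u j ^ 2 = ∑ j ∈ J ∪ S, d j ^ 2 :=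
        Finset.sum_congr rfl fun j hj => by simp only [hudef]; rw [if_pos hj]
      rw [← h2, h3]
      exact Finset.sum_le_sum_of_subset_of_nonneg Finset.subset_union_left
        (fun _ _ _ => sq_nonneg _)
    have hqfu : lamMin Φ (s + m) * ∑ j, u j ^ 2 ≤ qf Φ u := by
      have h := lamMin_le_ratio Φ hΦ (s + m) u hu_ne hu_sparse
      have hpos : 0 < ∑ j, u j ^ 2 := sum_sq_pos_of_ne_zero hu_ne
      rw [le_div_iff₀ hpos] at h
      linarith
    have hsq_u : Real.sqrt (lamMin Φ (s + m)) * Real.sqrt (∑ j ∈ J, d j ^ 2)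
        ≤ Real.sqrt (qf Φ u) := by
      have h1 : lamMin Φ (s + m) * ∑ j ∈ J, d j ^ 2 ≤ qf Φ u :=
        le_trans (mul_le_mul_of_nonneg_left hu2_ge hlmin_pos.le) hqfu
      calc Real.sqrt (lamMin Φ (s + m)) * Real.sqrt (∑ j ∈ J, d j ^ 2)
          = Real.sqrt (lamMin Φ (s + m) * ∑ j ∈ J, d j ^ 2) :=
            (Real.sqrt_mul hlmin_pos.le _).symm
        _ ≤ Real.sqrt (qf Φ u) := Real.sqrt_le_sqrt h1
    have htri : Real.sqrt (qf Φ u) ≤ Real.sqrt (qf Φ d) + Real.sqrt (qf Φ w) := by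
      have huw : u = d + (-w) := by
        rw [hdu]
        abel
      rw [huw]
      calc Real.sqrt (qf Φ (d + -w)) ≤ Real.sqrt (qf Φ d) + Real.sqrt (qf Φ (-w)) :=
            sqrt_qf_add Φ hΦ d (-w)
        _ = Real.sqrt (qf Φ d) + Real.sqrt (qf Φ w) := by rw [qf_neg]
    have hw2 : Real.sqrt (qf Φ w) ≤
        μ * Cσ * (Real.sqrt s * Real.sqrt (lamMax Φ m)) / Real.sqrt m
          * Real.sqrt (∑ j ∈ J, d j ^ 2) := by
      refine le_trans hw_bound ?_
      have hSig : ∑ j ∈ Jᶜ, |d j|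
          ≤ μ * Cσ * (Real.sqrt s * Real.sqrt (∑ j ∈ J, d j ^ 2)) := by
        have h := mul_le_mul_of_nonneg_left hCS hμC.le
        linarith [hl1, h]
      have hlmax_sqrt : 0 ≤ Real.sqrt (lamMax Φ m) := Real.sqrt_nonneg _
      have hinv : 0 ≤ (Real.sqrt (m:ℝ))⁻¹ := inv_nonneg.mpr hsm_pos.le
      have hrw : Real.sqrt (lamMax Φ m) * ((∑ j ∈ Jᶜ, |d j|) / Real.sqrt m)
          = Real.sqrt (lamMax Φ m) * (∑ j ∈ Jᶜ, |d j|) * (Real.sqrt (m:ℝ))⁻¹ := by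
        ring
      have hrw2 : μ * Cσ * (Real.sqrt s * Real.sqrt (lamMax Φ m)) / Real.sqrt m
            * Real.sqrt (∑ j ∈ J, d j ^ 2)
          = Real.sqrt (lamMax Φ m)
            * (μ * Cσ * (Real.sqrt s * Real.sqrt (∑ j ∈ J, d j ^ 2)))
            * (Real.sqrt (m:ℝ))⁻¹ := by
        ring
      rw [hrw, hrw2]
      apply mul_le_mul_of_nonneg_right _ hinv
      exact mul_le_mul_of_nonneg_left hSig hlmax_sqrt
    have hfinal : (Real.sqrt (lamMin Φ (s + m)) -
        μ * Cσ * (Real.sqrt s * Real.sqrt (lamMax Φ m)) / Real.sqrt m)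
          * Real.sqrt (∑ j ∈ J, d j ^ 2) ≤ Real.sqrt (qf Φ d) := by
      linarith [hsq_u, htri, hw2]
    have hq2 : ((Real.sqrt (lamMin Φ (s + m)) -
        μ * Cσ * (Real.sqrt s * Real.sqrt (lamMax Φ m)) / Real.sqrt m)
          * Real.sqrt (∑ j ∈ J, d j ^ 2)) ^ 2 ≤ Real.sqrt (qf Φ d) ^ 2 :=
      pow_le_pow_left₀ (mul_pos hc_pos hL).le hfinal 2
    rw [Real.sq_sqrt (qf_nonneg' Φ hΦ d)] at hq2
    have hL2 : Real.sqrt (∑ j ∈ J, d j ^ 2) ^ 2 = ∑ j ∈ J, d j ^ 2 :=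
      Real.sq_sqrt hLpos.le
    have hfin2 : (Real.sqrt (lamMin Φ (s + m)) -
        μ * Cσ * (Real.sqrt s * Real.sqrt (lamMax Φ m)) / Real.sqrt m) ^ 2
          * (∑ j ∈ J, d j ^ 2)
        = ((Real.sqrt (lamMin Φ (s + m)) -
            μ * Cσ * (Real.sqrt s * Real.sqrt (lamMax Φ m)) / Real.sqrt m)
          * Real.sqrt (∑ j ∈ J, d j ^ 2)) ^ 2 := by
      linear_combination (-(Real.sqrt (lamMin Φ (s + m)) -
        μ * Cσ * (Real.sqrt s * Real.sqrt (lamMax Φ m)) / Real.sqrt m) ^ 2) * hL2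
    rw [hr_eq, le_div_iff₀ hLpos, hfin2]
    exact hq2
end
end

section
/- Suppose n ≥ N0. Then with probability at least 1 − 2p^{−τ}, max_{1≤k≤p} |ξ_k − b_k|/σ_k ≤ (2√((τ+1) log p) + 1)/√n. -/
open MeasureTheory ProbabilityTheory Real
open scoped RealInnerProductSpace BigOperators ENNReal

noncomputable section

/-- `L²((0,∞))`. -/
abbrev Lp2 : Type := Lp ℝ 2 (volume.restrict (Set.Ioi (0:ℝ)))


lemma my_fact_ge (j : ℕ) : 2 * 3 ^ j ≤ (j + 2).factorial := by
  induction j with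
  | zero => simp [Nat.factorial]
  | succ j ih =>
      calc 2 * 3 ^ (j + 1) = 3 * (2 * 3 ^ j) := by ring
        _ ≤ 3 * (j + 2).factorial := Nat.mul_le_mul_left 3 ih
        _ ≤ (j + 3) * (j + 2).factorial := Nat.mul_le_mul_right _ (by omega)
        _ = (j + 1 + 2).factorial := (Nat.factorial_succ (j + 2)).symm

lemma my_exp_tsum (y : ℝ) : Real.exp y = ∑' n : ℕ, y ^ n / n.factorial := by
  rw [Real.exp_eq_exp_ℝ, NormedSpace.exp_eq_tsum_div]

set_option maxHeartbeats 1000000 in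
lemma my_exp_pointwise {x M s : ℝ} (hx : |x| ≤ M) (hs : 0 ≤ s) (hsM : s * M < 3) :
    Real.exp (s * x) ≤ 1 + s * x + x ^ 2 * (s ^ 2 / (2 * (1 - s * M / 3))) := by
  have hM : 0 ≤ M := (abs_nonneg x).trans hx
  have hsum : Summable (fun n : ℕ => (s * x) ^ n / n.factorial) :=
    Real.summable_pow_div_factorial _
  have hr0 : 0 ≤ s * M / 3 := by positivity
  have hr1 : s * M / 3 < 1 := by linarith
  have hgeo : Summable (fun j : ℕ => x ^ 2 * (s ^ 2 / 2) * (s * M / 3) ^ j) :=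
    (summable_geometric_of_lt_one hr0 hr1).mul_left _
  have hsplit : Real.exp (s * x)
      = (1 + s * x) + ∑' j : ℕ, (s * x) ^ (j + 2) / (j + 2).factorial := by
    rw [my_exp_tsum, ← Summable.sum_add_tsum_nat_add 2 hsum]
    congr 1
    simp [Finset.sum_range_succ, Nat.factorial]
  have hterm : ∀ j : ℕ, (s * x) ^ (j + 2) / (j + 2).factorial
      ≤ x ^ 2 * (s ^ 2 / 2) * (s * M / 3) ^ j := by
    intro j
    have h1 : (s * x) ^ (j + 2) ≤ x ^ 2 * (s ^ (j + 2) * M ^ j) := by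
      calc (s * x) ^ (j + 2) ≤ |(s * x) ^ (j + 2)| := le_abs_self _
        _ = s ^ (j + 2) * |x| ^ (j + 2) := by
            rw [abs_pow, abs_mul, abs_of_nonneg hs, mul_pow]
        _ = s ^ (j + 2) * (|x| ^ j * x ^ 2) := by
            rw [pow_add |x| j 2, sq_abs]
        _ ≤ s ^ (j + 2) * (M ^ j * x ^ 2) := by
            gcongr ?_ * (?_ * x ^ 2)
            · exact pow_le_pow_left₀ (abs_nonneg x) hx j
        _ = x ^ 2 * (s ^ (j + 2) * M ^ j) := by ring
    have hfac : (2 * 3 ^ j : ℝ) ≤ ((j + 2).factorial : ℝ) := by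
      exact_mod_cast Nat.cast_le.mpr (my_fact_ge j)
    have hnum : 0 ≤ x ^ 2 * (s ^ (j + 2) * M ^ j) := by positivity
    calc (s * x) ^ (j + 2) / ((j + 2).factorial : ℝ)
        ≤ x ^ 2 * (s ^ (j + 2) * M ^ j) / ((j + 2).factorial : ℝ) := by
          gcongr
      _ ≤ x ^ 2 * (s ^ (j + 2) * M ^ j) / (2 * 3 ^ j) := by
          gcongr
      _ = x ^ 2 * (s ^ 2 / 2) * (s * M / 3) ^ j := by
          rw [div_pow, mul_pow]
          field_simp
          ring
  have htail : ∑' j : ℕ, (s * x) ^ (j + 2) / ((j + 2).factorial : ℝ)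
      ≤ x ^ 2 * (s ^ 2 / (2 * (1 - s * M / 3))) := by
    calc ∑' j : ℕ, (s * x) ^ (j + 2) / ((j + 2).factorial : ℝ)
        ≤ ∑' j : ℕ, x ^ 2 * (s ^ 2 / 2) * (s * M / 3) ^ j :=
          Summable.tsum_le_tsum hterm ((summable_nat_add_iff 2).mpr hsum) hgeo
      _ = x ^ 2 * (s ^ 2 / 2) * (1 - s * M / 3)⁻¹ := by
          rw [tsum_mul_left, tsum_geometric_of_lt_one hr0 hr1]
      _ = x ^ 2 * (s ^ 2 / (2 * (1 - s * M / 3))) := by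
          have : (0:ℝ) < 1 - s * M / 3 := by linarith
          field_simp
  rw [hsplit]
  linarith

lemma my_arith {a b K t : ℝ} (ha : 0 < a) (hb : 0 ≤ b) (hK : 0 < K)
    (ht : 0 < t) (ht2 : t ^ 2 = 4 * K * a) (hbt : b * t ≤ 3 * a) :
    ∃ s : ℝ, 0 ≤ s ∧ s * b < 3 ∧ -s * t + a * (s ^ 2 / (2 * (1 - s * b / 3))) ≤ -K := by
  have hd : 0 < 3 * a + b * t := by nlinarith
  refine ⟨3 * t / (3 * a + b * t), by positivity, ?_, ?_⟩
  · rw [div_mul_eq_mul_div, div_lt_iff₀ hd]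
    nlinarith
  · have h1 : 1 - (3 * t / (3 * a + b * t)) * b / 3 = 3 * a / (3 * a + b * t) := by
      field_simp
      ring
    rw [h1]
    have h2 : a * ((3 * t / (3 * a + b * t)) ^ 2 / (2 * (3 * a / (3 * a + b * t))))
        = 3 * t ^ 2 / (2 * (3 * a + b * t)) := by
      field_simp
    have h3 : -(3 * t / (3 * a + b * t)) * t = -(3 * t ^ 2 / (3 * a + b * t)) := by
      ring
    rw [h2, h3]
    rw [show -(3 * t ^ 2 / (3 * a + b * t)) + 3 * t ^ 2 / (2 * (3 * a + b * t))
        = -(3 * t ^ 2 / (2 * (3 * a + b * t))) by field_simp; ring]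
    rw [neg_le_neg_iff] ---- maybe wrong name
    rw [le_div_iff₀ (by positivity)]
    nlinarith [mul_nonneg hK.le (by linarith : (0:ℝ) ≤ 3 * a - b * t)]



lemma my_mgf_bound {Ω : Type*} [MeasurableSpace Ω] {P : Measure Ω} [IsProbabilityMeasure P]
    {X : Ω → ℝ} (hX : Measurable X) {M s v : ℝ}
    (hb : ∀ ω, |X ω| ≤ M) (hmean : ∫ ω, X ω ∂P = 0)
    (hvar : ∫ ω, (X ω) ^ 2 ∂P = v) (hs : 0 ≤ s) (hsM : s * M < 3) :
    mgf X P s ≤ Real.exp (v * (s ^ 2 / (2 * (1 - s * M / 3)))) := by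
  set c : ℝ := s ^ 2 / (2 * (1 - s * M / 3)) with hc
  have hintX : Integrable X P := by
    refine (integrable_const M).mono' hX.aestronglyMeasurable ?_
    exact Filter.Eventually.of_forall fun ω => by simpa using hb ω
  have hintX2 : Integrable (fun ω => (X ω) ^ 2) P := by
    refine (integrable_const (M ^ 2)).mono' (hX.pow_const 2).aestronglyMeasurable ?_
    refine Filter.Eventually.of_forall fun ω => ?_
    have : |X ω| ^ 2 ≤ M ^ 2 := pow_le_pow_left₀ (abs_nonneg _) (hb ω) 2
    simpa [abs_pow, sq_abs] using this
  have hintexp : Integrable (fun ω => Real.exp (s * X ω)) P := by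
    refine (integrable_const (Real.exp (s * M))).mono'
      ((hX.const_mul s).exp).aestronglyMeasurable ?_
    refine Filter.Eventually.of_forall fun ω => ?_
    have h1 : s * X ω ≤ s * M :=
      mul_le_mul_of_nonneg_left ((le_abs_self _).trans (hb ω)) hs
    simpa [abs_of_nonneg (Real.exp_nonneg _)] using Real.exp_le_exp.mpr h1
  have hintRHS : Integrable (fun ω => 1 + s * X ω + (X ω) ^ 2 * c) P :=
    ((integrable_const 1).add (hintX.const_mul s)).add (hintX2.mul_const c)
  have h1 : mgf X P s ≤ ∫ ω, (1 + s * X ω + (X ω) ^ 2 * c) ∂P := by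
    unfold mgf
    exact integral_mono hintexp hintRHS fun ω => my_exp_pointwise (hb ω) hs hsM
  have hA : Integrable (fun ω => 1 + s * X ω) P :=
    (integrable_const 1).add (hintX.const_mul s)
  have hB : Integrable (fun ω => (X ω) ^ 2 * c) P := hintX2.mul_const c
  have h2 : ∫ ω, (1 + s * X ω + (X ω) ^ 2 * c) ∂P = 1 + v * c := by
    rw [integral_add hA hB, integral_add (integrable_const 1) (hintX.const_mul s),
      integral_const, integral_const_mul, integral_mul_const, hmean, hvar]
    simp
  rw [h2] at h1
  have h3 : v * c + 1 ≤ Real.exp (v * c) := Real.add_one_le_exp _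
  linarith

lemma my_tail_bound {Ω : Type*} [MeasurableSpace Ω] {P : Measure Ω} [IsProbabilityMeasure P]
    {n : ℕ} {X : Fin n → Ω → ℝ} (hmeas : ∀ i, Measurable (X i))
    (hindep : iIndepFun X P)
    {M s v t : ℝ} (hb : ∀ i ω, |X i ω| ≤ M)
    (hmean : ∀ i, ∫ ω, X i ω ∂P = 0) (hvar : ∀ i, ∫ ω, (X i ω) ^ 2 ∂P = v)
    (hs : 0 ≤ s) (hsM : s * M < 3) :
    (P {ω | t ≤ ∑ i, X i ω}).toReal ≤
      Real.exp (-s * t + n * (v * (s ^ 2 / (2 * (1 - s * M / 3))))) := by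
  set c : ℝ := s ^ 2 / (2 * (1 - s * M / 3)) with hc
  have hSmeas : Measurable (fun ω => ∑ i, X i ω) :=
    Finset.measurable_sum Finset.univ fun i _ => hmeas i
  have hint : Integrable (fun ω => Real.exp (s * ∑ i, X i ω)) P := by
    refine (integrable_const (Real.exp (s * (n * M)))).mono'
      ((hSmeas.const_mul s).exp).aestronglyMeasurable ?_
    refine Filter.Eventually.of_forall fun ω => ?_
    have h1 : ∑ i, X i ω ≤ n * M := by
      calc ∑ i, X i ω ≤ ∑ i : Fin n, M :=
            Finset.sum_le_sum fun i _ => (le_abs_self _).trans (hb i ω)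
        _ = n * M := by simp [Finset.sum_const, nsmul_eq_mul]
    have h2 : s * ∑ i, X i ω ≤ s * (n * M) := mul_le_mul_of_nonneg_left h1 hs
    simpa [abs_of_nonneg (Real.exp_nonneg _)] using Real.exp_le_exp.mpr h2
  have hch := measure_ge_le_exp_mul_mgf (X := fun ω => ∑ i, X i ω) (μ := P) t hs hint
  have hmgf : mgf (fun ω => ∑ i, X i ω) P s ≤ Real.exp (n * (v * c)) := by
    have hsum : (fun ω => ∑ i, X i ω) = ∑ i, X i := by
      funext ω; simp
    rw [hsum, hindep.mgf_sum hmeas]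
    calc ∏ i : Fin n, mgf (X i) P s ≤ ∏ _i : Fin n, Real.exp (v * c) := by
          refine Finset.prod_le_prod (fun i _ => mgf_nonneg) fun i _ =>
            my_mgf_bound (hmeas i) (hb i) (hmean i) (hvar i) hs hsM
      _ = Real.exp (v * c) ^ (n : ℕ) := by simp
      _ = Real.exp (n * (v * c)) := by rw [← Real.exp_nat_mul]
  calc (P {ω | t ≤ ∑ i, X i ω}).toReal ≤ Real.exp (-s * t) * mgf (fun ω => ∑ i, X i ω) P s := hch
    _ ≤ Real.exp (-s * t) * Real.exp (n * (v * c)) := by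
        exact mul_le_mul_of_nonneg_left hmgf (Real.exp_nonneg _)
    _ = Real.exp (-s * t + n * (v * c)) := (Real.exp_add _ _).symm




/-- **Large deviation bound \fr{large_dev}.**  If `n ≥ N0`, then with probability at least
`1 - 2 p^{-τ}` one has `max_k |ξ_k - b_k| / σ_k ≤ (2 √((τ+1) log p) + 1)/√n`. -/
theorem large_deviation_xi
    {Ω : Type*} [MeasurableSpace Ω] (P : Measure Ω) [IsProbabilityMeasure P]
    (p n : ℕ) (hp : 2 ≤ p) (hn : 1 ≤ n)
    (φ : Fin p → Lp2) (f : Lp2)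
    -- `Y, Y_1, …, Y_n` i.i.d. ℕ-valued random variables
    (Y : Ω → ℕ) (Yi : Fin n → Ω → ℕ)
    (hYmeas : Measurable Y) (hYimeas : ∀ i, Measurable (Yi i))
    (hindep : iIndepFun Yi P)
    (hident : ∀ i, P.map (Yi i) = P.map Y)
    -- the functions `ψ_k`, bounded, with positive variances `σ_k²` and bias at most `σ_k/√n`
    (ψ : Fin p → ℕ → ℝ) (σ : Fin p → ℝ)
    (hψbdd : ∀ k, BddAbove (Set.range fun m => |ψ k m|))
    (hσpos : ∀ k, 0 < σ k)
    (hvar : ∀ k, variance (fun ω => ψ k (Y ω)) P = (σ k) ^ 2)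
    (hbias : ∀ k, |(∫ ω, ψ k (Y ω) ∂P) - ⟪f, φ k⟫| ≤ σ k / Real.sqrt n)
    (τ : ℝ) (hτ : 0 < τ)
    -- `n ≥ N0`
    (hN0 : (16 / 9) * (τ + 1) * Real.log p *
        (⨆ k : Fin p, (⨆ m : ℕ, |ψ k m|) ^ 2 / (σ k) ^ 2) ≤ (n : ℝ)) :
    ENNReal.ofReal (1 - 2 * (p : ℝ) ^ (-τ)) ≤
      P {ω | ∀ k : Fin p,
        |((n : ℝ)⁻¹ * ∑ i, ψ k (Yi i ω)) - ⟪f, φ k⟫| / σ k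
          ≤ (2 * Real.sqrt ((τ + 1) * Real.log p) + 1) / Real.sqrt n} := by
  classical
  have hp0 : (0:ℝ) < p := by positivity
  have hp1 : (1:ℝ) < p := by exact_mod_cast (by omega : 1 < p)
  have hL : 0 < Real.log p := Real.log_pos hp1
  set K : ℝ := (τ + 1) * Real.log p with hKdef
  have hKpos : 0 < K := mul_pos (by linarith) hL
  have hn0 : (0:ℝ) < n := by exact_mod_cast hn
  have hsqn : 0 < Real.sqrt n := Real.sqrt_pos.mpr hn0
  have hgm : ∀ g : ℕ → ℝ, Measurable g := fun g => measurable_of_countable g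
  have main : ∀ k : Fin p, ∃ A B : Set Ω, MeasurableSet A ∧ MeasurableSet B ∧
      P A ≤ ENNReal.ofReal (Real.exp (-K)) ∧ P B ≤ ENNReal.ofReal (Real.exp (-K)) ∧
      ∀ ω, ω ∉ A → ω ∉ B →
        |((n : ℝ)⁻¹ * ∑ i, ψ k (Yi i ω)) - ⟪f, φ k⟫| / σ k
          ≤ (2 * Real.sqrt K + 1) / Real.sqrt n := by
    intro k
    have hσk := hσpos k
    set μ0 : ℝ := ∫ ω, ψ k (Y ω) ∂P with hμ0def
    set M0 : ℝ := ⨆ m : ℕ, |ψ k m| with hM0def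
    have hψle : ∀ m, |ψ k m| ≤ M0 := fun m => le_ciSup (hψbdd k) m
    have hM0nn : 0 ≤ M0 := (abs_nonneg _).trans (hψle 0)
    -- integrability
    have hintZ : ∀ Z : Ω → ℕ, Measurable Z → Integrable (fun ω => ψ k (Z ω)) P := by
      intro Z hZ
      refine (integrable_const M0).mono' ((hgm (ψ k)).comp hZ).aestronglyMeasurable ?_
      exact Filter.Eventually.of_forall fun ω => by simpa using hψle (Z ω)
    -- mean / second moment transfer
    have htrans : ∀ (g : ℕ → ℝ) (i : Fin n),
        ∫ ω, g (Yi i ω) ∂P = ∫ ω, g (Y ω) ∂P := by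
      intro g i
      have e1 : ∫ ω, g (Yi i ω) ∂P = ∫ m, g m ∂(P.map (Yi i)) :=
        (integral_map (hYimeas i).aemeasurable (hgm g).aestronglyMeasurable).symm
      have e2 : ∫ m, g m ∂(P.map Y) = ∫ ω, g (Y ω) ∂P :=
        integral_map hYmeas.aemeasurable (hgm g).aestronglyMeasurable
      rw [e1, hident i, e2]
    have hmean_i : ∀ i, ∫ ω, ψ k (Yi i ω) ∂P = μ0 := by
      intro i; rw [hμ0def]; exact htrans (ψ k) i
    have hmu_le : |μ0| ≤ M0 := by
      have h := norm_integral_le_of_norm_le_const (μ := P) (f := fun ω => ψ k (Y ω))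
        (C := M0) (Filter.Eventually.of_forall fun ω => by simpa using hψle (Y ω))
      simpa [hμ0def] using h
    -- variance
    have hmem : MemLp (fun ω => ψ k (Y ω)) 2 P := by
      refine (memLp_top_of_bound ((hgm (ψ k)).comp hYmeas).aestronglyMeasurable M0 ?_).mono_exponent le_top
      exact Filter.Eventually.of_forall fun ω => by simpa using hψle (Y ω)
    have hvarY : ∫ ω, (ψ k (Y ω) - μ0) ^ 2 ∂P = σ k ^ 2 := by
      rw [← hvar k, variance_eq_integral hmem.aemeasurable]
    have hvar_i : ∀ i, ∫ ω, (ψ k (Yi i ω) - μ0) ^ 2 ∂P = σ k ^ 2 := by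
      intro i
      rw [htrans (fun m => (ψ k m - μ0) ^ 2) i]
      exact hvarY
    -- the centered variables
    have hXb : ∀ (i : Fin n) ω, |ψ k (Yi i ω) - μ0| ≤ 2 * M0 := by
      intro i ω
      calc |ψ k (Yi i ω) - μ0| ≤ |ψ k (Yi i ω)| + |μ0| := abs_sub _ _
        _ ≤ M0 + M0 := add_le_add (hψle _) hmu_le
        _ = 2 * M0 := by ring
    have hXmean : ∀ i, ∫ ω, (ψ k (Yi i ω) - μ0) ∂P = 0 := by
      intro i
      rw [integral_sub (hintZ (Yi i) (hYimeas i)) (integrable_const μ0), hmean_i i]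
      simp
    have hX'mean : ∀ i, ∫ ω, (μ0 - ψ k (Yi i ω)) ∂P = 0 := by
      intro i
      rw [integral_sub (integrable_const μ0) (hintZ (Yi i) (hYimeas i)), hmean_i i]
      simp
    have hX'var : ∀ i, ∫ ω, (μ0 - ψ k (Yi i ω)) ^ 2 ∂P = σ k ^ 2 := by
      intro i
      have : ∀ ω, (μ0 - ψ k (Yi i ω)) ^ 2 = (ψ k (Yi i ω) - μ0) ^ 2 := fun ω => by ring
      simp_rw [this]
      exact hvar_i i
    -- N0 condition, per k
    have hsup : (⨆ m : ℕ, |ψ k m|) ^ 2 / (σ k) ^ 2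
        ≤ ⨆ k : Fin p, (⨆ m : ℕ, |ψ k m|) ^ 2 / (σ k) ^ 2 :=
      le_ciSup (f := fun k : Fin p => (⨆ m : ℕ, |ψ k m|) ^ 2 / (σ k) ^ 2)
        (Set.Finite.bddAbove (Set.finite_range _)) k
    have hN0k : 16 / 9 * K * (M0 ^ 2 / σ k ^ 2) ≤ (n : ℝ) := by
      rw [hKdef]
      calc 16 / 9 * ((τ + 1) * Real.log p) * (M0 ^ 2 / σ k ^ 2)
          = 16 / 9 * (τ + 1) * Real.log p * ((⨆ m : ℕ, |ψ k m|) ^ 2 / (σ k) ^ 2) := by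
            rw [← hM0def]; ring
        _ ≤ 16 / 9 * (τ + 1) * Real.log p *
              (⨆ k : Fin p, (⨆ m : ℕ, |ψ k m|) ^ 2 / (σ k) ^ 2) := by
            refine mul_le_mul_of_nonneg_left hsup ?_
            have : (0:ℝ) ≤ τ + 1 := by linarith
            positivity
        _ ≤ (n : ℝ) := hN0
    have hN0k' : 16 / 9 * K * M0 ^ 2 ≤ (n : ℝ) * σ k ^ 2 := by
      have e : M0 ^ 2 / σ k ^ 2 * σ k ^ 2 = M0 ^ 2 := by
        field_simp
      calc 16 / 9 * K * M0 ^ 2 = 16 / 9 * K * (M0 ^ 2 / σ k ^ 2) * σ k ^ 2 := by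
            rw [mul_assoc (16 / 9 * K), e]
        _ ≤ (n : ℝ) * σ k ^ 2 := mul_le_mul_of_nonneg_right hN0k (sq_nonneg _)
    -- the threshold t
    set t0 : ℝ := 2 * σ k * Real.sqrt (K * n) with ht0def
    have hKn : (0:ℝ) < K * n := mul_pos hKpos hn0
    have ht0pos : 0 < t0 := by
      rw [ht0def]; positivity
    have ht2 : t0 ^ 2 = 4 * K * ((n : ℝ) * σ k ^ 2) := by
      rw [ht0def, mul_pow, mul_pow, Real.sq_sqrt hKn.le]; ring
    have hbt : (2 * M0) * t0 ≤ 3 * ((n : ℝ) * σ k ^ 2) := by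
      have hA : 0 ≤ (2 * M0) * t0 := by positivity
      have hB : (0:ℝ) ≤ 3 * ((n : ℝ) * σ k ^ 2) := by positivity
      have hsq : ((2 * M0) * t0) ^ 2 ≤ (3 * ((n : ℝ) * σ k ^ 2)) ^ 2 := by
        have e1 : ((2 * M0) * t0) ^ 2 = 4 * M0 ^ 2 * t0 ^ 2 := by ring
        rw [e1, ht2]
        nlinarith [hN0k', mul_nonneg hn0.le (sq_nonneg (σ k)), sq_nonneg M0, hKpos.le]
      have h := Real.sqrt_le_sqrt hsq
      rwa [Real.sqrt_sq hA, Real.sqrt_sq hB] at h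
    obtain ⟨s, hs0, hsb, hsle⟩ := my_arith (a := (n : ℝ) * σ k ^ 2) (b := 2 * M0)
      (by positivity) (by positivity) hKpos ht0pos ht2 hbt
    -- the two bad events
    refine ⟨{ω | t0 ≤ ∑ i, (ψ k (Yi i ω) - μ0)}, {ω | t0 ≤ ∑ i, (μ0 - ψ k (Yi i ω))},
      ?_, ?_, ?_, ?_, ?_⟩
    · exact measurableSet_le measurable_const
        (Finset.measurable_sum Finset.univ fun i _ =>
          ((hgm _).comp (hYimeas i)).sub measurable_const)
    · exact measurableSet_le measurable_const
        (Finset.measurable_sum Finset.univ fun i _ =>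
          measurable_const.sub ((hgm _).comp (hYimeas i)))
    · -- upper tail
      have hind : iIndepFun (fun i ω => ψ k (Yi i ω) - μ0) P :=
        hindep.comp (fun i m => ψ k m - μ0) (fun i => hgm _)
      have htail := my_tail_bound (X := fun i ω => ψ k (Yi i ω) - μ0)
        (fun i => ((hgm _).comp (hYimeas i)).sub measurable_const) hind
        (M := 2 * M0) (s := s) (v := σ k ^ 2) (t := t0) hXb hXmean hvar_i hs0 hsb
      have hexp : -s * t0 + (n : ℝ) * (σ k ^ 2 * (s ^ 2 / (2 * (1 - s * (2 * M0) / 3)))) ≤ -K := by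
        have e : (n : ℝ) * (σ k ^ 2 * (s ^ 2 / (2 * (1 - s * (2 * M0) / 3))))
            = (n : ℝ) * σ k ^ 2 * (s ^ 2 / (2 * (1 - s * (2 * M0) / 3))) := by ring
        rw [e]; exact hsle
      have hle : (P {ω | t0 ≤ ∑ i, (ψ k (Yi i ω) - μ0)}).toReal ≤ Real.exp (-K) :=
        htail.trans (Real.exp_le_exp.mpr hexp)
      rw [← ENNReal.ofReal_toReal (measure_ne_top P _)]
      exact ENNReal.ofReal_le_ofReal hle
    · -- lower tail
      have hind : iIndepFun (fun i ω => μ0 - ψ k (Yi i ω)) P :=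
        hindep.comp (fun i m => μ0 - ψ k m) (fun i => hgm _)
      have hX'b : ∀ (i : Fin n) ω, |μ0 - ψ k (Yi i ω)| ≤ 2 * M0 := by
        intro i ω
        rw [abs_sub_comm]
        exact hXb i ω
      have htail := my_tail_bound (X := fun i ω => μ0 - ψ k (Yi i ω))
        (fun i => measurable_const.sub ((hgm _).comp (hYimeas i))) hind
        (M := 2 * M0) (s := s) (v := σ k ^ 2) (t := t0) hX'b hX'mean hX'var hs0 hsb
      have hexp : -s * t0 + (n : ℝ) * (σ k ^ 2 * (s ^ 2 / (2 * (1 - s * (2 * M0) / 3)))) ≤ -K := by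
        have e : (n : ℝ) * (σ k ^ 2 * (s ^ 2 / (2 * (1 - s * (2 * M0) / 3))))
            = (n : ℝ) * σ k ^ 2 * (s ^ 2 / (2 * (1 - s * (2 * M0) / 3))) := by ring
        rw [e]; exact hsle
      have hle : (P {ω | t0 ≤ ∑ i, (μ0 - ψ k (Yi i ω))}).toReal ≤ Real.exp (-K) :=
        htail.trans (Real.exp_le_exp.mpr hexp)
      rw [← ENNReal.ofReal_toReal (measure_ne_top P _)]
      exact ENNReal.ofReal_le_ofReal hle
    · -- pointwise bound on the good set
      intro ω hA hB
      simp only [Set.mem_setOf_eq, not_le] at hA hB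
      have hsum' : ∑ i, (μ0 - ψ k (Yi i ω)) = -∑ i, (ψ k (Yi i ω) - μ0) := by
        rw [← Finset.sum_neg_distrib]
        exact Finset.sum_congr rfl fun i _ => by ring
      rw [hsum'] at hB
      have habs : |∑ i, (ψ k (Yi i ω) - μ0)| ≤ t0 := abs_le.mpr ⟨by linarith, hA.le⟩
      have hsplit : ((n : ℝ)⁻¹ * ∑ i, ψ k (Yi i ω)) - ⟪f, φ k⟫
          = (n : ℝ)⁻¹ * (∑ i, (ψ k (Yi i ω) - μ0)) + (μ0 - ⟪f, φ k⟫) := by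
        have e : ∑ i, (ψ k (Yi i ω) - μ0) = (∑ i, ψ k (Yi i ω)) - n * μ0 := by
          rw [Finset.sum_sub_distrib, Finset.sum_const, Finset.card_univ, Fintype.card_fin,
            nsmul_eq_mul]
        rw [e]
        field_simp
        ring
      have hb1 : |((n : ℝ)⁻¹ * ∑ i, ψ k (Yi i ω)) - ⟪f, φ k⟫|
          ≤ (n : ℝ)⁻¹ * t0 + σ k / Real.sqrt n := by
        rw [hsplit]
        calc |(n : ℝ)⁻¹ * (∑ i, (ψ k (Yi i ω) - μ0)) + (μ0 - ⟪f, φ k⟫)|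
            ≤ |(n : ℝ)⁻¹ * (∑ i, (ψ k (Yi i ω) - μ0))| + |μ0 - ⟪f, φ k⟫| := abs_add_le _ _
          _ ≤ (n : ℝ)⁻¹ * t0 + σ k / Real.sqrt n := by
              refine add_le_add ?_ ?_
              · rw [abs_mul, abs_of_nonneg (by positivity : (0:ℝ) ≤ (n:ℝ)⁻¹)]
                exact mul_le_mul_of_nonneg_left habs (by positivity)
              · exact hbias k
      have e1 : (n : ℝ)⁻¹ * t0 = 2 * σ k * Real.sqrt K / Real.sqrt n := by
        rw [ht0def, Real.sqrt_mul hKpos.le]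
        rw [eq_div_iff (ne_of_gt hsqn)]
        field_simp
        linear_combination Real.mul_self_sqrt hn0.le
      calc |((n : ℝ)⁻¹ * ∑ i, ψ k (Yi i ω)) - ⟪f, φ k⟫| / σ k
          ≤ ((n : ℝ)⁻¹ * t0 + σ k / Real.sqrt n) / σ k := by gcongr
        _ = (2 * Real.sqrt K + 1) / Real.sqrt n := by
            rw [e1]
            field_simp
  -- assemble
  choose A B hAm hBm hPA hPB hgood using main
  set bad : Set Ω := ⋃ k, (A k ∪ B k) with hbaddef
  have hbadm : MeasurableSet bad := MeasurableSet.iUnion fun k => (hAm k).union (hBm k)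
  have hPbad : P bad ≤ ENNReal.ofReal (2 * (p : ℝ) ^ (-τ)) := by
    calc P bad ≤ ∑' k : Fin p, P (A k ∪ B k) := measure_iUnion_le _
      _ = ∑ k : Fin p, P (A k ∪ B k) := tsum_fintype _
      _ ≤ ∑ _k : Fin p, (ENNReal.ofReal (Real.exp (-K)) + ENNReal.ofReal (Real.exp (-K))) :=
          Finset.sum_le_sum fun k _ =>
            le_trans (measure_union_le _ _) (add_le_add (hPA k) (hPB k))
      _ = (p : ℝ≥0∞) * (ENNReal.ofReal (Real.exp (-K)) + ENNReal.ofReal (Real.exp (-K))) := by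
          rw [Finset.sum_const, Finset.card_univ, Fintype.card_fin, nsmul_eq_mul]
      _ = ENNReal.ofReal ((p : ℝ) * (Real.exp (-K) + Real.exp (-K))) := by
          rw [← ENNReal.ofReal_add (Real.exp_nonneg _) (Real.exp_nonneg _)]
          rw [← ENNReal.ofReal_natCast p]
          rw [← ENNReal.ofReal_mul (by positivity)]
      _ = ENNReal.ofReal (2 * (p : ℝ) ^ (-τ)) := by
          congr 1
          have hpexp : (p : ℝ) ^ (-τ) = (p : ℝ) * Real.exp (-K) := by
            calc (p : ℝ) ^ (-τ) = Real.exp (Real.log p * (-τ)) := Real.rpow_def_of_pos hp0 _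
              _ = Real.exp (Real.log p) * Real.exp (-K) := by
                  rw [← Real.exp_add, hKdef]; ring_nf
              _ = (p : ℝ) * Real.exp (-K) := by rw [Real.exp_log hp0]
          rw [hpexp]; ring
  have hsub : badᶜ ⊆ {ω | ∀ k : Fin p,
      |((n : ℝ)⁻¹ * ∑ i, ψ k (Yi i ω)) - ⟪f, φ k⟫| / σ k
        ≤ (2 * Real.sqrt K + 1) / Real.sqrt n} := by
    intro ω hω k
    have h1 : ω ∉ A k := fun h => hω (Set.mem_iUnion.mpr ⟨k, Or.inl h⟩)
    have h2 : ω ∉ B k := fun h => hω (Set.mem_iUnion.mpr ⟨k, Or.inr h⟩)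
    exact hgood k ω h1 h2
  calc ENNReal.ofReal (1 - 2 * (p : ℝ) ^ (-τ))
      = ENNReal.ofReal 1 - ENNReal.ofReal (2 * (p : ℝ) ^ (-τ)) :=
        ENNReal.ofReal_sub 1 (by positivity)
    _ = 1 - ENNReal.ofReal (2 * (p : ℝ) ^ (-τ)) := by rw [ENNReal.ofReal_one]
    _ ≤ 1 - P bad := tsub_le_tsub_left hPbad 1
    _ = P badᶜ := (prob_compl_eq_one_sub hbadm).symm
    _ ≤ P _ := measure_mono hsub
end
end

section
/- Let f : ℕ → ℝ be bounded. Then for every j ∈ ℕ, ∫₀^∞ (e^{−λ} λ^j / j!) · ( Σ_{l=0}^∞ (e^{−λ} λ^l / l!) f(l) ) dλ = Σ_{l=0}^∞ binom(j+l, l) · 2^{−(j+l+1)} · f(l), where both the inner series and the right-hand series converge absolutely. -/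
open MeasureTheory
open scoped BigOperators

lemma key_int (n : ℕ) :
    ∫ x in Set.Ioi (0:ℝ), x ^ n * Real.exp (-(2*x))
      = (Nat.factorial n : ℝ) / 2 ^ (n+1) := by
  have h := Real.integral_rpow_mul_exp_neg_mul_Ioi (a := n + 1) (r := 2)
    (by positivity) (by norm_num)
  rw [show ((n:ℝ) + 1) - 1 = (n : ℝ) by ring] at h
  simp_rw [Real.rpow_natCast] at h
  rw [h, Real.Gamma_nat_eq_factorial]
  rw [show ((n:ℝ)+1) = ((n+1 : ℕ) : ℝ) by push_cast; ring, Real.rpow_natCast]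
  rw [div_pow, one_pow, one_div, div_eq_mul_inv, mul_comm]

lemma key_integrable (n : ℕ) :
    IntegrableOn (fun x : ℝ => x ^ n * Real.exp (-(2*x))) (Set.Ioi 0) := by
  have h := integrableOn_rpow_mul_exp_neg_mul_rpow (p := 1) (s := n) (b := 2)
    (lt_of_lt_of_le neg_one_lt_zero n.cast_nonneg) one_pos (by norm_num)
  refine h.congr_fun (fun x hx => ?_) measurableSet_Ioi
  beta_reduce
  rw [Real.rpow_natCast, Real.rpow_one, neg_mul]

lemma zpow_split (j l : ℕ) :
    (2:ℝ) ^ (-(j + l + 1 : ℤ)) = (2:ℝ) ^ (-(j+1:ℤ)) * (1/2:ℝ)^l := by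
  rw [show (-(j+l+1:ℤ)) = (-(j+1:ℤ)) + (-(l:ℤ)) by ring,
    zpow_add₀ (by norm_num : (2:ℝ) ≠ 0)]
  simp [zpow_neg, zpow_natCast, one_div, inv_pow]

lemma zpow_nat (j l : ℕ) :
    (2:ℝ) ^ (-(j + l + 1 : ℤ)) = ((2:ℝ) ^ (j+l+1))⁻¹ := by
  rw [zpow_neg, show ((j:ℤ)+l+1) = ((j+l+1:ℕ):ℤ) by push_cast; ring, zpow_natCast]

/-- **The identity defining `Q Q*`.**  For bounded `f : ℕ → ℝ` and every `j ∈ ℕ`,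
`∫₀^∞ (e^{-λ} λ^j/j!) (∑_l (e^{-λ} λ^l/l!) f(l)) dλ = ∑_l C(j+l, l) 2^{-(j+l+1)} f(l)`,
where both the inner series (for every `λ > 0`) and the right-hand series converge
absolutely. -/
theorem QQstar_identity
    (f : ℕ → ℝ) (hf : ∃ C : ℝ, ∀ l, |f l| ≤ C) (j : ℕ) :
    (∀ x ∈ Set.Ioi (0:ℝ),
      Summable fun l : ℕ => |Real.exp (-x) * x ^ l / (Nat.factorial l) * f l|) ∧
    (Summable fun l : ℕ =>
      |((j + l).choose l : ℝ) * (2:ℝ) ^ (-(j + l + 1 : ℤ)) * f l|) ∧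
    (∫ x in Set.Ioi (0:ℝ),
        Real.exp (-x) * x ^ j / (Nat.factorial j) *
          ∑' l : ℕ, Real.exp (-x) * x ^ l / (Nat.factorial l) * f l)
      = ∑' l : ℕ, ((j + l).choose l : ℝ) * (2:ℝ) ^ (-(j + l + 1 : ℤ)) * f l := by
  obtain ⟨C, hC⟩ := hf
  have hC0 : 0 ≤ C := le_trans (abs_nonneg _) (hC 0)
  -- absolute value of terms
  have habs : ∀ l, |((j + l).choose l : ℝ) * (2:ℝ) ^ (-(j + l + 1 : ℤ)) * f l|
      = ((j + l).choose l : ℝ) * (2:ℝ) ^ (-(j + l + 1 : ℤ)) * |f l| := by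
    intro l
    rw [abs_mul, abs_mul, abs_of_nonneg (by positivity : (0:ℝ) ≤ ((j + l).choose l : ℝ)),
      abs_of_nonneg (by positivity : (0:ℝ) ≤ (2:ℝ) ^ (-(j + l + 1 : ℤ)))]
  -- Part 2 : RHS summability
  have hsum2 : Summable fun l : ℕ =>
      |((j + l).choose l : ℝ) * (2:ℝ) ^ (-(j + l + 1 : ℤ)) * f l| := by
    have hg : Summable fun l : ℕ => ((l + j).choose j : ℝ) * (1/2:ℝ)^l :=
      summable_choose_mul_geometric_of_norm_lt_one j (r := (1/2:ℝ)) (by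
        rw [Real.norm_eq_abs, abs_of_nonneg] <;> norm_num)
    refine Summable.of_nonneg_of_le (fun l => abs_nonneg _) (fun l => ?_)
      ((hg.mul_left ((2:ℝ) ^ (-(j+1:ℤ)) * C)))
    rw [habs, zpow_split]
    have hch : ((j + l).choose l : ℝ) = ((l + j).choose j : ℝ) := by
      rw [Nat.add_comm l j, Nat.choose_symm_add]
    rw [hch]
    have := mul_le_mul_of_nonneg_left (hC l)
      (by positivity : (0:ℝ) ≤ ((l + j).choose j : ℝ) * ((2:ℝ) ^ (-(j+1:ℤ)) * (1/2:ℝ)^l))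
    calc ((l + j).choose j : ℝ) * ((2:ℝ) ^ (-(j+1:ℤ)) * (1/2:ℝ)^l) * |f l|
        ≤ ((l + j).choose j : ℝ) * ((2:ℝ) ^ (-(j+1:ℤ)) * (1/2:ℝ)^l) * C := by
          exact mul_le_mul_of_nonneg_left (hC l) (by positivity)
      _ = (2:ℝ) ^ (-(j+1:ℤ)) * C * (((l + j).choose j : ℝ) * (1/2:ℝ)^l) := by ring
  -- Part 1 : inner summability
  have hsum1 : ∀ x ∈ Set.Ioi (0:ℝ),
      Summable fun l : ℕ => |Real.exp (-x) * x ^ l / (Nat.factorial l) * f l| := by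
    intro x hx
    have hx0 : (0:ℝ) < x := hx
    have hg : Summable fun l : ℕ => Real.exp (-x) * (x ^ l / (Nat.factorial l)) * C :=
      ((Real.summable_pow_div_factorial x).mul_left _).mul_right _
    refine Summable.of_nonneg_of_le (fun l => abs_nonneg _) (fun l => ?_) hg
    rw [abs_mul, abs_of_nonneg (by positivity : (0:ℝ) ≤ Real.exp (-x) * x ^ l / (Nat.factorial l))]
    rw [mul_div_assoc]
    exact mul_le_mul_of_nonneg_left (hC l) (by positivity)
  refine ⟨hsum1, hsum2, ?_⟩
  -- Part 3 : the integral identity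
  set G : ℕ → ℝ → ℝ := fun l x =>
    Real.exp (-x) * x ^ j / (Nat.factorial j) *
      (Real.exp (-x) * x ^ l / (Nat.factorial l) * f l) with hGdef
  have hG : ∀ l x, G l x
      = (f l / ((Nat.factorial j : ℝ) * (Nat.factorial l))) * (x ^ (j+l) * Real.exp (-(2*x))) := by
    intro l x
    have he : Real.exp (-(2*x)) = Real.exp (-x) * Real.exp (-x) := by
      rw [← Real.exp_add]; ring_nf
    rw [hGdef]
    simp only []
    rw [he]
    field_simp
    ring
  have hint : ∀ l, Integrable (G l) (volume.restrict (Set.Ioi 0)) := by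
    intro l
    have : G l = fun x => (f l / ((Nat.factorial j : ℝ) * (Nat.factorial l))) *
        (x ^ (j+l) * Real.exp (-(2*x))) := funext fun x => hG l x
    rw [this]
    exact ((key_integrable (j+l)).const_mul _)
  -- value of each integral
  have hval : ∀ l, ∫ x in Set.Ioi (0:ℝ), G l x
      = ((j + l).choose l : ℝ) * (2:ℝ) ^ (-(j + l + 1 : ℤ)) * f l := by
    intro l
    simp_rw [hG]
    rw [integral_const_mul, key_int]
    rw [Nat.cast_choose ℝ (Nat.le_add_left l j), zpow_nat]
    have h1 : (Nat.factorial j : ℝ) ≠ 0 := by positivity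
    have h2 : (Nat.factorial l : ℝ) ≠ 0 := by positivity
    have h3 : ((2:ℝ) ^ (j+l+1)) ≠ 0 := by positivity
    rw [show j + l - l = j by omega]
    field_simp
  -- summability of integrals of norms
  have hnorm : ∀ l, (∫ x in Set.Ioi (0:ℝ), ‖G l x‖)
      = |((j + l).choose l : ℝ) * (2:ℝ) ^ (-(j + l + 1 : ℤ)) * f l| := by
    intro l
    have : ∀ x ∈ Set.Ioi (0:ℝ), ‖G l x‖
        = |f l| / ((Nat.factorial j : ℝ) * (Nat.factorial l)) * (x ^ (j+l) * Real.exp (-(2*x))) := by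
      intro x hx
      have hx0 : (0:ℝ) < x := hx
      rw [hG, Real.norm_eq_abs, abs_mul, abs_div, abs_of_nonneg
        (by positivity : (0:ℝ) ≤ (Nat.factorial j : ℝ) * (Nat.factorial l)),
        abs_of_nonneg (by positivity : (0:ℝ) ≤ x ^ (j+l) * Real.exp (-(2*x)))]
    rw [setIntegral_congr_fun measurableSet_Ioi this, integral_const_mul, key_int, habs,
      Nat.cast_choose ℝ (Nat.le_add_left l j), zpow_nat,
      show j + l - l = j by omega]
    field_simp
  have hns : Summable fun l => ∫ x in Set.Ioi (0:ℝ), ‖G l x‖ := by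
    refine (summable_congr (fun l => ?_)).mpr hsum2
    exact hnorm l
  have key := MeasureTheory.integral_tsum_of_summable_integral_norm hint hns
  calc (∫ x in Set.Ioi (0:ℝ),
        Real.exp (-x) * x ^ j / (Nat.factorial j) *
          ∑' l : ℕ, Real.exp (-x) * x ^ l / (Nat.factorial l) * f l)
      = ∫ x in Set.Ioi (0:ℝ), ∑' l : ℕ, G l x := by
        congr 1; funext x; rw [hGdef, ← tsum_mul_left]
    _ = ∑' l : ℕ, ∫ x in Set.Ioi (0:ℝ), G l x := key.symm
    _ = ∑' l : ℕ, ((j + l).choose l : ℝ) * (2:ℝ) ^ (-(j + l + 1 : ℤ)) * f l := by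
        exact tsum_congr hval
end
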